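/- Assume H1 and H2 hold. Define m(z) = 2∫_z^∞ e^{γ(y)} ∫_y^∞ e^{-γ(ξ)} dξ dy and M(z) = ∫_z^∞ 1/q(y) dy (finite for large z). Then lim_{z→∞} m(z)/M(z) = 1. -/

import Mathlib

open MeasureTheory Real Filter Set Topology

set_option maxHeartbeats 1000000

lemma tail_eq {f : ℝ → ℝ} {A z : ℝ} (hz : A ≤ z) (hf : IntegrableOn f (Ioi A)) :
    ∫ x in Ioi z, f x = (∫ x in Ioi A, f x) - ∫ x in A..z, f x := by
  rw [intervalIntegral.integral_of_le hz]
  have hu : Ioc A z ∪ Ioi z = Ioi A := Ioc_union_Ioi_eq_Ioi hz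
  have hd : Disjoint (Ioc A z) (Ioi z) := Ioc_disjoint_Ioi le_rfl
  rw [← hu, setIntegral_union hd measurableSet_Ioi
      (hf.mono_set (by rw [← hu]; exact subset_union_left))
      (hf.mono_set (by rw [← hu]; exact subset_union_right))]
  ring

lemma tail_eq' {f : ℝ → ℝ} (hf : ∀ b, IntegrableOn f (Ioi b)) (A z : ℝ) :
    ∫ x in Ioi z, f x = (∫ x in Ioi A, f x) - ∫ x in A..z, f x := by
  rcases le_or_gt A z with h | h
  · exact tail_eq h (hf A)
  · have h2 := tail_eq (A := z) (z := A) h.le (hf z)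
    have h3 : ∫ x in A..z, f x = -∫ x in z..A, f x := intervalIntegral.integral_symm z A
    linarith

lemma tail_tendsto {f : ℝ → ℝ} {A : ℝ} (hf : IntegrableOn f (Ioi A)) :
    Tendsto (fun z => ∫ x in Ioi z, f x) atTop (𝓝 0) := by
  have h := intervalIntegral_tendsto_integral_Ioi A hf tendsto_id
  have h2 : Tendsto (fun z => (∫ x in Ioi A, f x) - ∫ x in A..z, f x) atTop
      (𝓝 ((∫ x in Ioi A, f x) - ∫ x in Ioi A, f x)) := tendsto_const_nhds.sub h
  rw [sub_self] at h2
  refine h2.congr' ?_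
  filter_upwards [Ioi_mem_atTop A] with z hz
  exact (tail_eq (le_of_lt hz) hf).symm

lemma tail_hasDerivAt {f : ℝ → ℝ} {A z : ℝ} (hz : A < z) (hf : IntegrableOn f (Ioi A))
    (hm : StronglyMeasurable f) (hc : ContinuousAt f z) :
    HasDerivAt (fun u => ∫ x in Ioi u, f x) (-f z) z := by
  have hmem : Ioi A ∈ 𝓝 z := Ioi_mem_nhds hz
  have heq : (fun u => ∫ x in Ioi u, f x) =ᶠ[𝓝 z]
      fun u => (∫ x in Ioi A, f x) - ∫ x in A..u, f x := by
    filter_upwards [hmem] with u hu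
    exact tail_eq (le_of_lt hu) hf
  have hint : IntervalIntegrable f volume A z := by
    rw [intervalIntegrable_iff_integrableOn_Ioc_of_le hz.le]
    exact hf.mono_set Ioc_subset_Ioi_self
  have hd : HasDerivAt (fun u => (∫ x in Ioi A, f x) - ∫ x in A..u, f x) (-f z) z := by
    simpa using ((intervalIntegral.integral_hasDerivAt_right hint
      (hm.stronglyMeasurableAtFilter) hc).const_sub (∫ x in Ioi A, f x))
  exact hd.congr_of_eventuallyEq heq

/-- Under H1 and H2, with m(z) = 2∫_z^∞ e^{γ(y)} ∫_y^∞ e^{-γ(ξ)} dξ dy and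
M(z) = ∫_z^∞ 1/q, one has m(z)/M(z) → 1. -/
theorem m_div_M_tendsto_one
    (q γ : ℝ → ℝ)
    (hq : ContDiff ℝ 1 q)
    (hγ : ∀ y, γ y = 2 * ∫ t in (0:ℝ)..y, q t)
    (H1 : ∫⁻ y in Set.Ioi (0:ℝ),
        ENNReal.ofReal (Real.exp (γ y)) *
          ∫⁻ z in Set.Ioi y, ENNReal.ofReal (Real.exp (-(γ z))) < ⊤)
    (H2a : Tendsto q atTop atTop)
    (H2b : Tendsto (fun x => deriv q x / q x ^ 2) atTop (nhds 0)) :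
    Tendsto
      (fun z =>
        (2 * ∫ y in Set.Ioi z, Real.exp (γ y) * ∫ ξ in Set.Ioi y, Real.exp (-(γ ξ))) /
          ∫ x in Set.Ioi z, 1 / q x)
      atTop (nhds 1) := by
  have hqc : Continuous q := hq.continuous
  have hqd : ∀ x, HasDerivAt q (deriv q x) x := fun x => (hq.differentiable one_ne_zero x).hasDerivAt
  have hq'c : Continuous (deriv q) := hq.continuous_deriv le_rfl
  -- derivative and continuity of γ
  have hγfun : γ = fun y => 2 * ∫ t in (0:ℝ)..y, q t := funext hγ
  have hγd : ∀ z, HasDerivAt γ (2 * q z) z := by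
    intro z
    rw [hγfun]
    exact (intervalIntegral.integral_hasDerivAt_right (hqc.intervalIntegrable _ _)
      (hqc.stronglyMeasurable.stronglyMeasurableAtFilter) hqc.continuousAt).const_mul 2
  have hγc : Continuous γ := by
    have : Differentiable ℝ γ := fun z => (hγd z).differentiableAt
    exact this.continuous
  -- a threshold beyond which q ≥ 1
  obtain ⟨A₀, hA₀⟩ := eventually_atTop.1 (H2a.eventually_ge_atTop 1)
  set A : ℝ := max A₀ 0 with hAdef
  have hA : ∀ x, A ≤ x → 1 ≤ q x := fun x hx => hA₀ x (le_trans (le_max_left _ _) hx)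
  have hA0 : (0:ℝ) ≤ A := le_max_right _ _
  have hqpos : ∀ x, A ≤ x → 0 < q x := fun x hx => lt_of_lt_of_le one_pos (hA x hx)
  -- growth of γ
  have hgrow : ∀ b, A ≤ b → ∀ z, b ≤ z → γ b + 2 * (z - b) ≤ γ z := by
    intro b hb z hzb
    have hsub : γ z - γ b = 2 * ∫ t in b..z, q t := by
      rw [hγ z, hγ b, ← mul_sub,
        intervalIntegral.integral_interval_sub_left (hqc.intervalIntegrable _ _)
          (hqc.intervalIntegrable _ _)]
    have hmono : (z - b) ≤ ∫ t in b..z, q t := by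
      have h1 : ∫ t in b..z, (1:ℝ) ≤ ∫ t in b..z, q t := by
        apply intervalIntegral.integral_mono_on hzb intervalIntegrable_const
          (hqc.intervalIntegrable _ _)
        intro x hx
        exact hA x (le_trans hb hx.1)
      simpa using h1
    linarith
  have hγtop : Tendsto γ atTop atTop := by
    apply tendsto_atTop_mono' atTop
      (show ∀ᶠ z in atTop, γ A + 2 * (z - A) ≤ γ z by
        filter_upwards [eventually_ge_atTop A] with z hz; exact hgrow A le_rfl z hz)
    apply tendsto_atTop_add_const_left
    exact (tendsto_atTop_add_const_right atTop (-A) tendsto_id).const_mul_atTop two_pos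
  have hexp0 : Tendsto (fun z => exp (-(γ z))) atTop (𝓝 0) :=
    Real.tendsto_exp_atBot.comp (tendsto_neg_atBot_iff.2 hγtop)
  -- integrability of e^{-γ} on all tails
  have hInt : ∀ b, IntegrableOn (fun ξ => exp (-(γ ξ))) (Ioi b) := by
    have hIA : IntegrableOn (fun ξ => exp (-(γ ξ))) (Ioi A) := by
      apply Integrable.mono' ((exp_neg_integrableOn_Ioi A two_pos).const_mul
        (exp (-(γ A) + 2 * A)))
      · exact (hγc.neg.rexp).aestronglyMeasurable
      · filter_upwards [ae_restrict_mem measurableSet_Ioi] with ξ hξ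
        have h1 := hgrow A le_rfl ξ (le_of_lt hξ)
        rw [norm_of_nonneg (exp_pos _).le, ← Real.exp_add]
        exact exp_le_exp.2 (by linarith)
    intro b
    rcases le_or_gt A b with h | h
    · exact hIA.mono_set (Ioi_subset_Ioi h)
    · have hu : Ioc b A ∪ Ioi A = Ioi b := Ioc_union_Ioi_eq_Ioi h.le
      rw [← hu]
      exact integrableOn_union.2 ⟨(hγc.neg.rexp).integrableOn_Ioc, hIA⟩
  set F : ℝ → ℝ := fun z => ∫ ξ in Ioi z, Real.exp (-(γ ξ)) with hFdef
  have hFc : Continuous F := by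
    have : F = fun z => (∫ ξ in Ioi 0, exp (-(γ ξ))) - ∫ t in (0:ℝ)..z, exp (-(γ t)) :=
      funext fun z => tail_eq' hInt 0 z
    rw [this]
    exact continuous_const.sub (intervalIntegral.continuous_primitive
      (fun a b => (hγc.neg.rexp).intervalIntegrable a b) 0)
  have hF0 : Tendsto F atTop (𝓝 0) := tail_tendsto (hInt 0)
  have hFpos : ∀ z, 0 < F z := by
    intro z
    refine (setIntegral_pos_iff_support_of_nonneg_ae ?_ (hInt z)).2 ?_
    · filter_upwards with x using (exp_pos _).le
    · have : Function.support (fun ξ => exp (-(γ ξ))) = univ := by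
        ext x; simp [(exp_pos _).ne']
      rw [this, univ_inter, Real.volume_Ioi]
      simp
  -- r := q'/(2q²) tends to 0
  set r : ℝ → ℝ := fun x => deriv q x / (2 * q x ^ 2) with hrdef
  have hrm : Measurable r :=
    hq'c.measurable.div (measurable_const.mul (hqc.measurable.pow_const 2))
  have hr0 : Tendsto r atTop (𝓝 0) := by
    have h := H2b.const_mul (1/2 : ℝ)
    rw [mul_zero] at h
    refine h.congr fun x => ?_
    rw [hrdef]
    ring
  -- φ := e^{-γ}/(2q)
  set φ : ℝ → ℝ := fun z => exp (-(γ z)) / (2 * q z) with hφdef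
  have hφd : ∀ z, A ≤ z → HasDerivAt φ (-(exp (-(γ z)) * (1 + r z))) z := by
    intro z hz
    have hqz : q z ≠ 0 := (hqpos z hz).ne'
    have hden : (2 * q z) ≠ 0 := by simp [hqz]
    have h1 : HasDerivAt (fun u => exp (-(γ u))) (exp (-(γ z)) * (-(2 * q z))) z := by
      simpa using ((hγd z).neg).exp
    have h2 : HasDerivAt (fun u => 2 * q u) (2 * deriv q z) z := (hqd z).const_mul 2
    have h3 := h1.div h2 hden
    refine h3.congr_deriv ?_
    rw [hrdef]
    field_simp
    ring
  have hφ0 : Tendsto φ atTop (𝓝 0) := by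
    have h2 : Tendsto (fun z => (2 * q z)⁻¹) atTop (𝓝 0) :=
      (H2a.const_mul_atTop two_pos).inv_tendsto_atTop
    have h3 := hexp0.mul h2
    rw [mul_zero] at h3
    exact h3.congr fun z => (div_eq_mul_inv _ _).symm
  -- the fundamental identity for φ
  have hφeq : ∀ z, A ≤ z → (∀ x, z ≤ x → |r x| ≤ 1/2) →
      φ z = ∫ ξ in Ioi z, exp (-(γ ξ)) * (1 + r ξ) := by
    intro z hz hrB
    have hint : IntegrableOn (fun ξ => -(exp (-(γ ξ)) * (1 + r ξ))) (Ioi z) := by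
      apply Integrable.mono' ((hInt z).const_mul (3/2))
      · exact ((hγc.neg.rexp.measurable.mul (measurable_const.add hrm)).neg).aestronglyMeasurable
      · filter_upwards [ae_restrict_mem measurableSet_Ioi] with ξ hξ
        have h1 : |r ξ| ≤ 1/2 := hrB ξ (le_of_lt hξ)
        have h2 : |1 + r ξ| ≤ 3/2 := by
          have := abs_add_le (1:ℝ) (r ξ)
          rw [abs_one] at this
          linarith
        rw [norm_neg, norm_mul, norm_of_nonneg (exp_pos _).le, Real.norm_eq_abs]
        nlinarith [exp_pos (-(γ ξ))]
    have hderiv : ∀ x ∈ Ici z, HasDerivAt φ (-(exp (-(γ x)) * (1 + r x))) x :=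
      fun x hx => hφd x (le_trans hz hx)
    have hthis := integral_Ioi_of_hasDerivAt_of_tendsto' hderiv hint hφ0
    rw [integral_neg] at hthis
    linarith
  -- the key ratio φ/F → 1
  have hRatio : Tendsto (fun z => φ z / F z) atTop (𝓝 1) := by
    rw [Metric.tendsto_atTop]
    intro ε hε
    set ε' : ℝ := min (ε/2) (1/2) with hε'def
    have hε'pos : 0 < ε' := lt_min (by linarith) (by norm_num)
    obtain ⟨B₁, hB₁⟩ := Metric.tendsto_atTop.1 hr0 ε' hε'pos
    refine ⟨max B₁ A, fun z hz => ?_⟩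
    have hzA : A ≤ z := le_trans (le_max_right _ _) hz
    have hrle : ∀ x, z ≤ x → |r x| ≤ ε' := by
      intro x hx
      have := hB₁ x (le_trans (le_trans (le_max_left _ _) hz) hx)
      rw [Real.dist_eq, sub_zero] at this
      exact this.le
    have hrhalf : ∀ x, z ≤ x → |r x| ≤ 1/2 :=
      fun x hx => (hrle x hx).trans (min_le_right _ _)
    have hid := hφeq z hzA hrhalf
    have hint1 : IntegrableOn (fun ξ => exp (-(γ ξ)) * r ξ) (Ioi z) := by
      apply Integrable.mono' ((hInt z).const_mul ε')
      · exact (hγc.neg.rexp.measurable.mul hrm).aestronglyMeasurable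
      · filter_upwards [ae_restrict_mem measurableSet_Ioi] with ξ hξ
        have h1 := hrle ξ (le_of_lt hξ)
        rw [norm_mul, norm_of_nonneg (exp_pos _).le, Real.norm_eq_abs]
        nlinarith [exp_pos (-(γ ξ))]
    have hsplit : φ z = F z + ∫ ξ in Ioi z, exp (-(γ ξ)) * r ξ := by
      rw [hid, ← integral_add (hInt z) hint1]
      congr 1
      ext ξ
      ring
    have hbound : |∫ ξ in Ioi z, exp (-(γ ξ)) * r ξ| ≤ ε' * F z := by
      calc |∫ ξ in Ioi z, exp (-(γ ξ)) * r ξ|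
          ≤ ∫ ξ in Ioi z, ‖exp (-(γ ξ)) * r ξ‖ := by
            rw [← Real.norm_eq_abs]
            exact norm_integral_le_integral_norm _
        _ ≤ ∫ ξ in Ioi z, ε' * exp (-(γ ξ)) := by
            apply setIntegral_mono_on hint1.norm ((hInt z).const_mul ε') measurableSet_Ioi
            intro ξ hξ
            have h1 := hrle ξ (le_of_lt hξ)
            rw [norm_mul, norm_of_nonneg (exp_pos _).le, Real.norm_eq_abs]
            nlinarith [exp_pos (-(γ ξ))]
        _ = ε' * F z := integral_const_mul _ _
    have hFz := hFpos z
    rw [Real.dist_eq]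
    have heq1 : φ z / F z - 1 = (∫ ξ in Ioi z, exp (-(γ ξ)) * r ξ) / F z := by
      rw [hsplit]
      field_simp
      ring
    rw [heq1, abs_div, abs_of_pos hFz]
    have h4 : |∫ ξ in Ioi z, exp (-(γ ξ)) * r ξ| / F z ≤ ε' := by
      rw [div_le_iff₀ hFz]
      linarith [hbound]
    have h5 : ε' ≤ ε/2 := min_le_left _ _
    linarith
  -- G := 2 q e^γ F → 1
  have hG1 : Tendsto (fun z => 2 * q z * (exp (γ z) * F z)) atTop (𝓝 1) := by
    have h := hRatio.inv₀ one_ne_zero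
    rw [inv_one] at h
    refine h.congr' ?_
    filter_upwards [eventually_ge_atTop A] with z hz
    have hq0 : q z ≠ 0 := (hqpos z hz).ne'
    have hF0' : F z ≠ 0 := (hFpos z).ne'
    rw [hφdef]
    simp only [Real.exp_neg]
    field_simp
  -- integrability of e^γ · F from H1
  have hh_cont : Continuous (fun y => exp (γ y) * F y) := hγc.rexp.mul hFc
  have hh_int : IntegrableOn (fun y => exp (γ y) * F y) (Ioi 0) := by
    have hFm : ∀ y : ℝ, (∫⁻ ξ in Ioi y, ENNReal.ofReal (exp (-(γ ξ)))) = ENNReal.ofReal (F y) := by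
      intro y
      rw [← ofReal_integral_eq_lintegral_ofReal (hInt y)
        (by filter_upwards with x using (exp_pos _).le)]
    simp_rw [hFm] at H1
    have H1' : ∫⁻ y in Ioi (0:ℝ), ENNReal.ofReal (exp (γ y) * F y) < ⊤ := by
      refine lt_of_eq_of_lt (lintegral_congr fun y => ?_) H1
      rw [ENNReal.ofReal_mul (exp_pos _).le]
    refine ⟨hh_cont.aestronglyMeasurable, ?_⟩
    rw [hasFiniteIntegral_iff_ofReal ?_]
    · exact H1'
    · filter_upwards with y using mul_nonneg (exp_pos _).le (hFpos y).le
  -- integrability of 1/q on a tail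
  obtain ⟨A₁', hA₁'⟩ := eventually_atTop.1
    (hG1.eventually (eventually_gt_nhds (by norm_num : (1/2:ℝ) < 1)))
  set A₁ : ℝ := max A₁' A with hA₁def
  have hA₁A : A ≤ A₁ := le_max_right _ _
  have hbd : ∀ z, A₁ ≤ z → 1 / q z ≤ 4 * (exp (γ z) * F z) := by
    intro z hz
    have h1 : 1/2 < 2 * q z * (exp (γ z) * F z) := hA₁' z (le_trans (le_max_left _ _) hz)
    have hq1 : 1 ≤ q z := hA z (le_trans hA₁A hz)
    rw [div_le_iff₀ (by linarith)]
    nlinarith [hFpos z, exp_pos (γ z)]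
  have h1q_int : IntegrableOn (fun x => 1 / q x) (Ioi A₁) := by
    apply Integrable.mono' ((hh_int.mono_set (Ioi_subset_Ioi (le_trans hA0 hA₁A))).const_mul 4)
    · exact (measurable_const.div hqc.measurable).aestronglyMeasurable
    · filter_upwards [ae_restrict_mem measurableSet_Ioi] with x hx
      have hq1 : 1 ≤ q x := hA x (le_trans hA₁A (le_of_lt hx))
      rw [norm_of_nonneg (div_nonneg zero_le_one (by linarith))]
      exact hbd x (le_of_lt hx)
  -- L'Hôpital
  apply HasDerivAt.lhopital_zero_atTop
    (f' := fun z => -(2 * (exp (γ z) * F z))) (g' := fun z => -(1 / q z))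
  · filter_upwards [eventually_gt_atTop 0] with z hz
    have hd := (tail_hasDerivAt hz hh_int hh_cont.stronglyMeasurable
      hh_cont.continuousAt).const_mul (2:ℝ)
    simpa [mul_comm, mul_neg] using hd
  · filter_upwards [eventually_gt_atTop A₁] with z hz
    exact tail_hasDerivAt hz h1q_int (measurable_const.div hqc.measurable).stronglyMeasurable
      (ContinuousAt.div continuousAt_const hqc.continuousAt (hqpos z (le_trans hA₁A hz.le)).ne')
  · filter_upwards [eventually_ge_atTop A₁] with z hz
    have hqz := hqpos z (le_trans hA₁A hz)
    simp [hqz.ne']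
  · simpa using (tail_tendsto hh_int).const_mul (2:ℝ)
  · exact tail_tendsto h1q_int
  · refine hG1.congr' ?_
    filter_upwards [eventually_ge_atTop A] with z hz
    have hq0 : q z ≠ 0 := (hqpos z hz).ne'
    rw [neg_div_neg_eq, div_div_eq_mul_div, div_one]
    ring
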